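/- In the linear CSMA network with n nodes, β-hop blocking, and fair activation rates σ_i = α(1+α)^{γ(i)-γ(1)}, the stationary throughput of every node i equals α/(1 + (β+1)α). Here the throughput of node i is θ_i = Z_n^{-1} Σ_{ω feasible, ω_i = 1} Π_j σ_j^{ω_j}, where a state ω ∈ {0,1}^n is feasible if ω_i ω_k = 0 whenever 1 ≤ |i-k| ≤ β, and Z_n = Σ_{ω feasible} Π_j σ_j^{ω_j}. -/

import Mathlib

open Finset

/-! ### Auxiliary development on `Finset ℕ` -/

/-- Feasibility for sets of naturals. -/
def FeasN (β : ℕ) (S : Finset ℕ) : Prop :=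
  ∀ i ∈ S, ∀ j ∈ S, i ≠ j → β < ((i : ℤ) - (j : ℤ)).natAbs

instance (β : ℕ) : DecidablePred (FeasN β) := fun S =>
  inferInstanceAs (Decidable (∀ i ∈ S, ∀ j ∈ S, i ≠ j → β < ((i : ℤ) - (j : ℤ)).natAbs))

lemma FeasN.mono {β : ℕ} {S T : Finset ℕ} (h : S ⊆ T) (hT : FeasN β T) : FeasN β S :=
  fun i hi j hj hij => hT i (h hi) j (h hj) hij

lemma feasN_empty (β : ℕ) : FeasN β ∅ := by intro i hi; simp at hi

/-- Partition function of the prefix `{0, …, k-1}`. -/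
noncomputable def PN (β : ℕ) (f : ℕ → ℝ) (k : ℕ) : ℝ :=
  ∑ S ∈ (range k).powerset.filter (FeasN β), ∏ i ∈ S, f i

lemma PN_zero (β : ℕ) (f : ℕ → ℝ) : PN β f 0 = 1 := by
  simp [PN, filter_singleton, feasN_empty]

lemma feasN_insert {β k : ℕ} {S : Finset ℕ} (hS : S ⊆ range k) :
    FeasN β (insert k S) ↔ FeasN β S ∧ S ⊆ range (k - β) := by
  constructor
  · intro h
    refine ⟨h.mono (subset_insert _ _), fun j hj => ?_⟩
    have hjk : j < k := mem_range.1 (hS hj)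
    have := h k (mem_insert_self _ _) j (mem_insert_of_mem hj) (by omega)
    rw [mem_range]; omega
  · rintro ⟨h1, h2⟩ i hi j hj hij
    rcases mem_insert.1 hi with hik | hiS
    · rcases mem_insert.1 hj with hjk | hjS
      · omega
      · have := mem_range.1 (h2 hjS); omega
    · rcases mem_insert.1 hj with hjk | hjS
      · have := mem_range.1 (h2 hiS); omega
      · exact h1 i hiS j hjS hij

lemma PN_succ (β : ℕ) (f : ℕ → ℝ) (k : ℕ) :
    PN β f (k + 1) = PN β f k + f k * PN β f (k - β) := by
  unfold PN
  rw [range_add_one, sum_filter, sum_filter, sum_filter,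
    sum_powerset_insert (by simp) (fun S => if FeasN β S then ∏ i ∈ S, f i else 0)]
  congr 1
  have hsub : range (k - β) ⊆ range k := by apply range_subset_range.2; omega
  calc (∑ S ∈ (range k).powerset, if FeasN β (insert k S) then ∏ i ∈ insert k S, f i else 0)
      = ∑ S ∈ (range k).powerset,
          if FeasN β S ∧ S ⊆ range (k - β) then f k * ∏ i ∈ S, f i else 0 := by
        apply sum_congr rfl; intro S hS
        have hS' : S ⊆ range k := mem_powerset.1 hS
        have hk : k ∉ S := fun h => by have := mem_range.1 (hS' h); omega
        by_cases h1 : FeasN β S ∧ S ⊆ range (k - β)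
        · rw [if_pos ((feasN_insert hS').2 h1), if_pos h1, prod_insert hk]
        · rw [if_neg (fun hc => h1 ((feasN_insert hS').1 hc)), if_neg h1]
    _ = ∑ S ∈ (range (k - β)).powerset,
          if FeasN β S ∧ S ⊆ range (k - β) then f k * ∏ i ∈ S, f i else 0 := by
        symm
        apply sum_subset (powerset_mono.2 hsub)
        intro S hS hS'
        rw [mem_powerset] at hS'
        simp [hS']
    _ = f k * ∑ S ∈ (range (k - β)).powerset, if FeasN β S then ∏ i ∈ S, f i else 0 := by
        rw [mul_sum]
        apply sum_congr rfl; intro S hS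
        have h2 : S ⊆ range (k - β) := mem_powerset.1 hS
        by_cases h1 : FeasN β S <;> simp [h1, h2]

lemma PN_closed (β c : ℕ) (hc : c ≤ β) (α : ℝ) (f : ℕ → ℝ) :
    ∀ k : ℕ, (∀ j < k, f j = α * (1 + α) ^ (min j c)) → (c = β ∨ k ≤ c + 1) →
      PN β f k = (1 + α) ^ k := by
  intro k
  induction k using Nat.strong_induction_on with
  | _ k ih =>
    match k with
    | 0 => intro _ _; simpa using PN_zero β f
    | (k + 1) =>
      intro hf hck
      have h1 : PN β f k = (1 + α) ^ k :=
        ih k (by omega) (fun j hj => hf j (by omega)) (by omega)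
      have h2 : PN β f (k - β) = (1 + α) ^ (k - β) :=
        ih (k - β) (by omega) (fun j hj => hf j (by omega)) (by omega)
      rw [PN_succ, h1, h2, hf k (by omega)]
      have hmin : min k c + (k - β) = k := by omega
      rw [mul_assoc, ← pow_add, hmin]
      ring

/-- The boundary-adjusted exponent. -/
def EN (n β j : ℕ) : ℕ := min j (min β (min (n - 1 - j) (n - β - 1)))

/-- The fair rates, as a function on `ℕ`. -/
noncomputable def fN (n β : ℕ) (α : ℝ) (j : ℕ) : ℝ := α * (1 + α) ^ (EN n β j)

lemma fN_eq (n β : ℕ) (α : ℝ) {j : ℕ} (hj : j < n - β) :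
    fN n β α j = α * (1 + α) ^ (min j (min β (n - β - 1))) := by
  unfold fN EN
  congr 2
  omega

lemma PN_prefix (n β : ℕ) (α : ℝ) {k : ℕ} (hk : k ≤ n - (β + 1)) :
    PN β (fN n β α) k = (1 + α) ^ k := by
  have hc : min β (n - β - 1) ≤ β := min_le_left _ _
  apply PN_closed β (min β (n - β - 1)) hc α
  · intro j hj
    rw [fN_eq n β α (by omega)]
  · omega

lemma PN_plateau (n β : ℕ) (hβ : β ≤ n - 1) (α : ℝ) :
    ∀ t, t ≤ β + 1 →
      PN β (fN n β α) (n - (β + 1) + t) = (1 + t * α) * (1 + α) ^ (n - (β + 1)) := by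
  intro t
  induction t with
  | zero =>
    intro _
    rw [show n - (β + 1) + 0 = n - (β + 1) by omega, PN_prefix n β α (le_refl _)]
    push_cast; ring
  | succ t ih =>
    intro ht
    have hk : n - (β + 1) + (t + 1) = (n - (β + 1) + t) + 1 := by omega
    rw [hk, PN_succ, ih (by omega)]
    set k' := n - (β + 1) + t with hk'
    have h2 : PN β (fN n β α) (k' - β) = (1 + α) ^ (k' - β) :=
      PN_prefix n β α (by omega)
    have hE : EN n β k' + (k' - β) = n - (β + 1) := by unfold EN; omega
    rw [h2]
    unfold fN
    rw [mul_assoc, ← pow_add, hE]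
    push_cast
    ring

/-- Suffix partition function via reflection. -/
lemma suffix_eq (β : ℕ) (f : ℕ → ℝ) (n a : ℕ) :
    ∑ S ∈ (Ico a n).powerset.filter (FeasN β), ∏ i ∈ S, f i
      = PN β (fun j => f (n - 1 - j)) (n - a) := by
  by_cases han : n ≤ a
  · rw [show n - a = 0 by omega, Ico_eq_empty (by omega)]
    simp [PN, filter_singleton, feasN_empty]
  · push_neg at han
    unfold PN
    apply sum_nbij' (fun S => S.image (fun x => n - 1 - x)) (fun T => T.image (fun x => n - 1 - x))
    · intro S hS
      simp only [mem_filter, mem_powerset] at hS ⊢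
      obtain ⟨hS1, hS2⟩ := hS
      constructor
      · intro y hy
        obtain ⟨x, hx, rfl⟩ := mem_image.1 hy
        have := mem_Ico.1 (hS1 hx)
        rw [mem_range]; omega
      · intro i hi j hj hij
        obtain ⟨x, hx, rfl⟩ := mem_image.1 hi
        obtain ⟨y, hy, rfl⟩ := mem_image.1 hj
        have hx' := mem_Ico.1 (hS1 hx)
        have hy' := mem_Ico.1 (hS1 hy)
        have hxy : x ≠ y := by omega
        have := hS2 x hx y hy hxy
        omega
    · intro T hT
      simp only [mem_filter, mem_powerset] at hT ⊢
      obtain ⟨hT1, hT2⟩ := hT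
      constructor
      · intro y hy
        obtain ⟨x, hx, rfl⟩ := mem_image.1 hy
        have := mem_range.1 (hT1 hx)
        rw [mem_Ico]; omega
      · intro i hi j hj hij
        obtain ⟨x, hx, rfl⟩ := mem_image.1 hi
        obtain ⟨y, hy, rfl⟩ := mem_image.1 hj
        have hx' := mem_range.1 (hT1 hx)
        have hy' := mem_range.1 (hT1 hy)
        have hxy : x ≠ y := by omega
        have := hT2 x hx y hy hxy
        omega
    · intro S hS
      simp only [mem_filter, mem_powerset] at hS
      rw [image_image]
      have : ∀ x ∈ S, ((fun x => n - 1 - x) ∘ (fun x => n - 1 - x)) x = id x := by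
        intro x hx
        have := mem_Ico.1 (hS.1 hx)
        simp only [Function.comp_apply, id_eq]; omega
      rw [image_congr this, image_id]
    · intro T hT
      simp only [mem_filter, mem_powerset] at hT
      rw [image_image]
      have : ∀ x ∈ T, ((fun x => n - 1 - x) ∘ (fun x => n - 1 - x)) x = id x := by
        intro x hx
        have := mem_range.1 (hT.1 hx)
        simp only [Function.comp_apply, id_eq]; omega
      rw [image_congr this, image_id]
    · intro S hS
      simp only [mem_filter, mem_powerset] at hS
      rw [prod_image]
      · apply prod_congr rfl
        intro x hx
        have := mem_Ico.1 (hS.1 hx)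
        congr 1; omega
      · intro x hx y hy hxy
        have := mem_Ico.1 (hS.1 hx)
        have := mem_Ico.1 (hS.1 hy)
        simp only at hxy
        omega

lemma suffix_closed (n β : ℕ) (hβ : β ≤ n - 1) (α : ℝ) (v : ℕ) :
    ∑ S ∈ (Ico (v + β + 1) n).powerset.filter (FeasN β), ∏ i ∈ S, fN n β α i
      = (1 + α) ^ (n - (v + β + 1)) := by
  rw [suffix_eq]
  apply PN_closed β (min β (n - β - 1)) (min_le_left _ _) α
  · intro j hj
    show fN n β α (n - 1 - j) = _
    unfold fN EN
    have : min (n - 1 - j) (min β (min (n - 1 - (n - 1 - j)) (n - β - 1)))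
        = min j (min β (n - β - 1)) := by omega
    rw [this]
  · omega

/-- Splitting feasible sets containing `v` into a left part and a right part. -/
lemma split_sum (n β v : ℕ) (hv : v < n) (f : ℕ → ℝ) :
    ∑ S ∈ (range n).powerset.filter (fun S => FeasN β S ∧ v ∈ S), ∏ i ∈ S, f i
      = f v * ((∑ L ∈ (range (v - β)).powerset.filter (FeasN β), ∏ i ∈ L, f i)
          * (∑ R ∈ (Ico (v + β + 1) n).powerset.filter (FeasN β), ∏ i ∈ R, f i)) := by
  have hdisj : Disjoint (range (v - β)) (Ico (v + β + 1) n) := by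
    rw [disjoint_left]
    intro x hx hx'
    have := mem_range.1 hx
    have := mem_Ico.1 hx'
    omega
  have hvnot : ∀ L R : Finset ℕ, L ⊆ range (v - β) → R ⊆ Ico (v + β + 1) n → v ∉ L ∪ R := by
    intro L R hL hR h
    rcases mem_union.1 h with h | h
    · have := mem_range.1 (hL h); omega
    · have := mem_Ico.1 (hR h); omega
  rw [sum_mul_sum, mul_sum]
  rw [show (∑ L ∈ (range (v - β)).powerset.filter (FeasN β),
        f v * ∑ R ∈ (Ico (v + β + 1) n).powerset.filter (FeasN β), (∏ i ∈ L, f i) * ∏ i ∈ R, f i)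
      = ∑ p ∈ ((range (v - β)).powerset.filter (FeasN β)) ×ˢ
            ((Ico (v + β + 1) n).powerset.filter (FeasN β)),
          f v * ((∏ i ∈ p.1, f i) * ∏ i ∈ p.2, f i) by rw [sum_product]; simp [mul_sum]]
  apply sum_nbij' (fun S => (S ∩ range (v - β), S ∩ Ico (v + β + 1) n))
    (fun p => insert v (p.1 ∪ p.2))
  · intro S hS
    simp only [mem_filter, mem_powerset, mem_product] at hS ⊢
    exact ⟨⟨inter_subset_right, hS.2.1.mono inter_subset_left⟩,
           ⟨inter_subset_right, hS.2.1.mono inter_subset_left⟩⟩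
  · rintro ⟨L, R⟩ hp
    simp only [mem_product, mem_filter, mem_powerset] at hp
    obtain ⟨⟨hL1, hL2⟩, ⟨hR1, hR2⟩⟩ := hp
    simp only [mem_filter, mem_powerset]
    refine ⟨?_, ?_, mem_insert_self _ _⟩
    · intro x hx
      rcases mem_insert.1 hx with h | h
      · rw [mem_range]; omega
      · rcases mem_union.1 h with h | h
        · have := mem_range.1 (hL1 h); rw [mem_range]; omega
        · have := mem_Ico.1 (hR1 h); rw [mem_range]; omega
    · intro i hi j hj hij
      rcases mem_insert.1 hi with hiv | hi' <;> rcases mem_insert.1 hj with hjv | hj'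
      · omega
      · rcases mem_union.1 hj' with h | h
        · have := mem_range.1 (hL1 h); omega
        · have := mem_Ico.1 (hR1 h); omega
      · rcases mem_union.1 hi' with h | h
        · have := mem_range.1 (hL1 h); omega
        · have := mem_Ico.1 (hR1 h); omega
      · rcases mem_union.1 hi' with h1 | h1 <;> rcases mem_union.1 hj' with h2 | h2
        · exact hL2 i h1 j h2 hij
        · have := mem_range.1 (hL1 h1); have := mem_Ico.1 (hR1 h2); omega
        · have := mem_Ico.1 (hR1 h1); have := mem_range.1 (hL1 h2); omega
        · exact hR2 i h1 j h2 hij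
  · intro S hS
    simp only [mem_filter, mem_powerset] at hS
    obtain ⟨hSn, hF, hvS⟩ := hS
    ext x
    simp only [mem_insert, mem_union, mem_inter, mem_range, mem_Ico]
    constructor
    · rintro (h | h | h)
      · rw [h]; exact hvS
      · exact h.1
      · exact h.1
    · intro hx
      by_cases hxv : x = v
      · exact Or.inl hxv
      · have h1 := hF x hx v hvS hxv
        have h2 : x < n := mem_range.1 (hSn hx)
        have : x < v - β ∨ (v + β + 1 ≤ x ∧ x < n) := by omega
        rcases this with h | h
        · exact Or.inr (Or.inl ⟨hx, h⟩)
        · exact Or.inr (Or.inr ⟨hx, h⟩)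
  · rintro ⟨L, R⟩ hp
    simp only [mem_product, mem_filter, mem_powerset] at hp
    obtain ⟨⟨hL1, hL2⟩, ⟨hR1, hR2⟩⟩ := hp
    have h1 : insert v (L ∪ R) ∩ range (v - β) = L := by
      ext x
      simp only [mem_inter, mem_insert, mem_union, mem_range]
      constructor
      · rintro ⟨h | h | h, hb⟩
        · omega
        · exact h
        · have := mem_Ico.1 (hR1 h); omega
      · intro hx
        exact ⟨Or.inr (Or.inl hx), mem_range.1 (hL1 hx)⟩
    have h2 : insert v (L ∪ R) ∩ Ico (v + β + 1) n = R := by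
      ext x
      simp only [mem_inter, mem_insert, mem_union, mem_Ico]
      constructor
      · rintro ⟨h | h | h, hb⟩
        · omega
        · have := mem_range.1 (hL1 h); omega
        · exact h
      · intro hx
        exact ⟨Or.inr (Or.inr hx), mem_Ico.1 (hR1 hx)⟩
    rw [h1, h2]
  · intro S hS
    simp only [mem_filter, mem_powerset] at hS
    obtain ⟨hSn, hF, hvS⟩ := hS
    have hL1 : S ∩ range (v - β) ⊆ range (v - β) := inter_subset_right
    have hR1 : S ∩ Ico (v + β + 1) n ⊆ Ico (v + β + 1) n := inter_subset_right
    have hSeq : S = insert v ((S ∩ range (v - β)) ∪ (S ∩ Ico (v + β + 1) n)) := by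
      ext x
      simp only [mem_insert, mem_union, mem_inter, mem_range, mem_Ico]
      constructor
      · intro hx
        by_cases hxv : x = v
        · exact Or.inl hxv
        · have h1 := hF x hx v hvS hxv
          have h2 : x < n := mem_range.1 (hSn hx)
          have : x < v - β ∨ (v + β + 1 ≤ x ∧ x < n) := by omega
          rcases this with h | h
          · exact Or.inr (Or.inl ⟨hx, h⟩)
          · exact Or.inr (Or.inr ⟨hx, h⟩)
      · rintro (h | h | h)
        · rw [h]; exact hvS
        · exact h.1
        · exact h.1
    conv_lhs => rw [hSeq]
    rw [prod_insert (hvnot _ _ hL1 hR1), prod_union (hdisj.mono hL1 hR1)]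

/-! ### Given statement -/

/-- A state (set of active nodes, 0-indexed) is feasible if no two distinct
active nodes are within distance β of each other. -/
def Feasible (n β : ℕ) (S : Finset (Fin n)) : Prop :=
  ∀ i ∈ S, ∀ j ∈ S, i ≠ j → β < ((i : ℤ) - (j : ℤ)).natAbs

instance (n β : ℕ) : DecidablePred (Feasible n β) := fun S =>
  inferInstanceAs (Decidable (∀ i ∈ S, ∀ j ∈ S, i ≠ j → β < ((i : ℤ) - (j : ℤ)).natAbs))

/-- Product-form weight of a state. -/
def weight {n : ℕ} (σ : Fin n → ℝ) (S : Finset (Fin n)) : ℝ := ∏ i ∈ S, σ i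

/-- Transfer of a filtered weighted sum from `Finset (Fin n)` to `Finset ℕ`. -/
lemma transfer (n : ℕ) (σ : Fin n → ℝ) (f : ℕ → ℝ) (hσf : ∀ i : Fin n, σ i = f i.val)
    (p : Finset ℕ → Prop) [DecidablePred p] (q : Finset (Fin n) → Prop) [DecidablePred q]
    (hpq : ∀ S : Finset (Fin n), q S ↔ p (S.image Fin.val)) :
    ∑ S ∈ univ.filter q, weight σ S = ∑ T ∈ (range n).powerset.filter p, ∏ i ∈ T, f i := by
  apply sum_nbij' (fun S => S.image Fin.val) (fun T => univ.filter (fun i : Fin n => i.val ∈ T))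
  · intro S hS
    simp only [mem_filter, mem_powerset, mem_univ, true_and] at hS ⊢
    refine ⟨fun x hx => ?_, (hpq S).1 hS⟩
    obtain ⟨i, _, rfl⟩ := mem_image.1 hx
    exact mem_range.2 i.isLt
  · intro T hT
    simp only [mem_filter, mem_powerset, mem_univ, true_and] at hT ⊢
    have himg : (univ.filter (fun i : Fin n => i.val ∈ T)).image Fin.val = T := by
      ext x
      simp only [mem_image, mem_filter, mem_univ, true_and]
      constructor
      · rintro ⟨i, hi, rfl⟩; exact hi
      · intro hx
        exact ⟨⟨x, mem_range.1 (hT.1 hx)⟩, hx, rfl⟩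
    rw [hpq, himg]
    exact hT.2
  · intro S _
    ext i
    simp only [mem_filter, mem_univ, true_and, mem_image]
    constructor
    · rintro ⟨j, hj, hji⟩
      rwa [show j = i from Fin.val_injective hji] at hj
    · intro hi; exact ⟨i, hi, rfl⟩
  · intro T hT
    simp only [mem_filter, mem_powerset] at hT
    ext x
    simp only [mem_image, mem_filter, mem_univ, true_and]
    constructor
    · rintro ⟨i, hi, rfl⟩; exact hi
    · intro hx
      exact ⟨⟨x, mem_range.1 (hT.1 hx)⟩, hx, rfl⟩
  · intro S _
    unfold weight
    rw [prod_image (fun i _ j _ h => Fin.val_injective h)]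
    exact prod_congr rfl fun i _ => hσf i

lemma feasible_iff (n β : ℕ) (S : Finset (Fin n)) :
    Feasible n β S ↔ FeasN β (S.image Fin.val) := by
  constructor
  · intro h i hi j hj hij
    obtain ⟨i', hi', rfl⟩ := mem_image.1 hi
    obtain ⟨j', hj', rfl⟩ := mem_image.1 hj
    have : i' ≠ j' := fun hc => hij (by rw [hc])
    have := h i' hi' j' hj' this
    omega
  · intro h i hi j hj hij
    have h1 : (i : ℕ) ∈ S.image Fin.val := mem_image_of_mem _ hi
    have h2 : (j : ℕ) ∈ S.image Fin.val := mem_image_of_mem _ hj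
    have : (i : ℕ) ≠ (j : ℕ) := fun hc => hij (Fin.val_injective hc)
    have := h _ h1 _ h2 this
    omega

/-- with fair rates σ_i = α(1+α)^{γ(i)-γ(1)}, where
γ(i)-γ(1) = min(i-1, β, n-i, n-β-1) (here nodes are 0-indexed, so node v+1 has
exponent min(v, β, n-1-v, n-β-1)), every node has throughput α/(1+(β+1)α). -/
theorem stmt1 (n β : ℕ) (hn : 1 ≤ n) (hβ : β ≤ n - 1) (α : ℝ) (hα : 0 < α)
    (σ : Fin n → ℝ)
    (hσ : ∀ v : Fin n,
      σ v = α * (1 + α) ^ (min (v : ℕ) (min β (min (n - 1 - (v : ℕ)) (n - β - 1)))))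
    (Z : ℝ)
    (hZ : Z = ∑ S ∈ univ.filter (Feasible n β), weight σ S) :
    ∀ v : Fin n,
      (∑ S ∈ univ.filter (fun S => Feasible n β S ∧ v ∈ S), weight σ S) / Z
        = α / (1 + (β + 1) * α) := by
  intro v
  have hσf : ∀ i : Fin n, σ i = fN n β α i.val := fun i => by rw [hσ]; rfl
  -- the partition function
  have hZ' : Z = (1 + (β + 1 : ℝ) * α) * (1 + α) ^ (n - (β + 1)) := by
    rw [hZ, transfer n σ (fN n β α) hσf (FeasN β) (Feasible n β) (feasible_iff n β)]
    have : (range n).powerset.filter (FeasN β) = (range n).powerset.filter (FeasN β) := rfl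
    have hPN : (∑ T ∈ (range n).powerset.filter (FeasN β), ∏ i ∈ T, fN n β α i)
        = PN β (fN n β α) n := rfl
    have hplat := PN_plateau n β hβ α (β + 1) (le_refl _)
    rw [show n - (β + 1) + (β + 1) = n by omega] at hplat
    rw [hPN, hplat]
    push_cast
    ring
  -- the numerator
  have hnum : (∑ S ∈ univ.filter (fun S => Feasible n β S ∧ v ∈ S), weight σ S)
      = α * (1 + α) ^ (n - (β + 1)) := by
    rw [transfer n σ (fN n β α) hσf (fun T => FeasN β T ∧ (v : ℕ) ∈ T)
      (fun S => Feasible n β S ∧ v ∈ S)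
      (fun S => by
        rw [feasible_iff n β S]
        constructor
        · rintro ⟨h1, h2⟩; exact ⟨h1, mem_image_of_mem _ h2⟩
        · rintro ⟨h1, h2⟩
          obtain ⟨i, hi, hiv⟩ := mem_image.1 h2
          exact ⟨h1, by rwa [Fin.val_injective hiv] at hi⟩)]
    rw [split_sum n β v v.isLt (fN n β α)]
    have hL : (∑ L ∈ (range ((v : ℕ) - β)).powerset.filter (FeasN β), ∏ i ∈ L, fN n β α i)
        = (1 + α) ^ ((v : ℕ) - β) := by
      have : (∑ L ∈ (range ((v : ℕ) - β)).powerset.filter (FeasN β), ∏ i ∈ L, fN n β α i)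
          = PN β (fN n β α) ((v : ℕ) - β) := rfl
      rw [this]
      apply PN_prefix n β α
      have := v.isLt
      omega
    rw [hL, suffix_closed n β hβ α (v : ℕ)]
    unfold fN
    rw [mul_assoc, ← pow_add, ← pow_add]
    have hvn := v.isLt
    have hE : EN n β (v : ℕ) + ((v : ℕ) - β + (n - ((v : ℕ) + β + 1))) = n - (β + 1) := by
      unfold EN; omega
    rw [hE]
  rw [hnum, hZ']
  have hpow : (0 : ℝ) < (1 + α) ^ (n - (β + 1)) := by positivity
  have hden : (0 : ℝ) < 1 + (β + 1 : ℝ) * α := by positivity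
  field_simp
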